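/- arXiv:2307.06907 — 5 statements merged into one kernel-verified Lean document; each statement's English description precedes it below -/
import Mathlib

section
/- For every partition regular function ρ : F → [Λ]^ω and every F ∈ F, there exists E ∈ F with E ⊆ F such that for every finite set L ⊆ Λ there is a finite set K ⊆ Ω with ρ(E \ K) ⊆ ρ(E) \ L. -/
/-- An ideal on a countably infinite set `Λ`: a nonempty family of subsets closed under
subsets and finite unions, containing all finite sets, with `Λ` itself not a member. -/
def IsIdealOn (Λ : Type*) (I : Set (Set Λ)) : Prop :=
  I.Nonempty ∧
  (∀ A B : Set Λ, A ⊆ B → B ∈ I → A ∈ I) ∧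
  (∀ A B : Set Λ, A ∈ I → B ∈ I → A ∪ B ∈ I) ∧
  (∀ A : Set Λ, A.Finite → A ∈ I) ∧
  (Set.univ : Set Λ) ∉ I

/-- A partition regular function `ρ : F → [Λ]^ω`, where `F` is a nonempty family of
infinite subsets of `Ω` closed under removal of finite sets; `ρ` takes infinite values
and satisfies monotonicity (M), partition regularity (R) and finite support (S). -/
structure IsPartitionRegular {Ω Λ : Type*} (F : Set (Set Ω)) (ρ : Set Ω → Set Λ) : Prop where
  nonempty : F.Nonempty
  mem_infinite : ∀ E ∈ F, E.Infinite
  diff_finite_mem : ∀ E ∈ F, ∀ K : Set Ω, K.Finite → E \ K ∈ F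
  rho_infinite : ∀ E ∈ F, (ρ E).Infinite
  mono : ∀ E ∈ F, ∀ G ∈ F, E ⊆ G → ρ E ⊆ ρ G
  part : ∀ G ∈ F, ∀ A B : Set Λ, ρ G = A ∪ B → ∃ E ∈ F, ρ E ⊆ A ∨ ρ E ⊆ B
  supp : ∀ G ∈ F, ∃ E ∈ F, E ⊆ G ∧ ∀ a ∈ ρ E, ∃ K : Set Ω, K.Finite ∧ a ∉ ρ (E \ K)

/-- The ideal `I_ρ = {A ⊆ Λ : ∀ F ∈ F, ρ(F) ⊄ A}` associated with `ρ`. -/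
def assocIdeal {Ω Λ : Type*} (F : Set (Set Ω)) (ρ : Set Ω → Set Λ) : Set (Set Λ) :=
  {A : Set Λ | ∀ E ∈ F, ¬ ρ E ⊆ A}

/-- For every partition regular `ρ : F → [Λ]^ω` and every `F ∈ F` there is `E ∈ F` with
`E ⊆ F` such that for every finite `L ⊆ Λ` there is a finite `K ⊆ Ω` with
`ρ(E \ K) ⊆ ρ(E) \ L`. -/
theorem finite_support_version {Ω Λ : Type*} [Countable Ω] [Infinite Ω] [Countable Λ] [Infinite Λ]
    (F : Set (Set Ω)) (ρ : Set Ω → Set Λ) (h : IsPartitionRegular F ρ) :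
    ∀ G ∈ F, ∃ E ∈ F, E ⊆ G ∧
      ∀ L : Set Λ, L.Finite → ∃ K : Set Ω, K.Finite ∧ ρ (E \ K) ⊆ ρ E \ L := by
  intro G hG
  obtain ⟨E, hE, hEG, hsupp⟩ := h.supp G hG
  refine ⟨E, hE, hEG, ?_⟩
  intro L hL
  classical
  -- choose for each a ∈ ρ E a finite K with a ∉ ρ (E \ K)
  choose! f hf hfa using hsupp
  set S : Set Λ := L ∩ ρ E with hS
  have hSfin : S.Finite := hL.inter_of_left _
  refine ⟨⋃ a ∈ S, f a, ?_, ?_⟩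
  · exact hSfin.biUnion fun a ha => hf a ha.2
  · intro b hb
    have hKfin : (⋃ a ∈ S, f a).Finite := hSfin.biUnion fun a ha => hf a ha.2
    have hEK : E \ (⋃ a ∈ S, f a) ∈ F := h.diff_finite_mem E hE _ hKfin
    have hbE : b ∈ ρ E := h.mono _ hEK E hE (Set.diff_subset) hb
    refine ⟨hbE, fun hbL => ?_⟩
    have hbS : b ∈ S := ⟨hbL, hbE⟩
    have hEa : E \ f b ∈ F := h.diff_finite_mem E hE _ (hf b hbE)
    have hsub : E \ (⋃ a ∈ S, f a) ⊆ E \ f b :=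
      Set.diff_subset_diff_right (Set.subset_biUnion_of_mem hbS)
    exact hfa b hbE (h.mono _ hEK _ hEa hsub hb)
end

section
/- Let L = {A ∈ [ℕ]^ω : for all n, e_A(n+1) − e_A(n) > e_A(n)}, where e_A is the increasing enumeration of A. Then L is a closed subset of [ℕ]^ω and the restriction Δ↾L of the difference function is continuous on L. -/
/-- The characteristic function of a set, identifying `Set X` with `X → Bool`
(i.e. with `2^X`). -/
noncomputable def chi {X : Type*} (A : Set X) : X → Bool :=
  fun x => @decide (x ∈ A) (Classical.propDecidable _)

/-- The product (Cantor) topology on `P(X) = 2^X`, pulled back along the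
identification of sets with their characteristic functions. -/
noncomputable instance setTopology (X : Type*) : TopologicalSpace (Set X) :=
  TopologicalSpace.induced chi inferInstance

/-- `Δ(E)`: all positive differences of distinct elements of `E`. -/
def Del (E : Set ℕ) : Set ℕ :=
  {d : ℕ | ∃ a ∈ E, ∃ b ∈ E, b < a ∧ d = a - b}

/-- The family `L` of infinite sets whose increasing enumeration `e_A` satisfies
`e_A(n+1) − e_A(n) > e_A(n)` for all `n`. -/
def Lfam : Set {A : Set ℕ // A.Infinite} :=
  {A | ∀ n : ℕ,
    Nat.nth (· ∈ A.val) n < Nat.nth (· ∈ A.val) (n + 1) - Nat.nth (· ∈ A.val) n}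

open scoped Classical

lemma chi_eq_boolIndicator {X : Type*} (A : Set X) : chi A = A.boolIndicator := by
  funext x
  unfold chi Set.boolIndicator
  by_cases h : x ∈ A <;> simp [h]

lemma continuous_chi {X : Type*} : Continuous (chi : Set X → X → Bool) :=
  continuous_induced_dom

lemma isClopen_mem (x : ℕ) : IsClopen {A : Set ℕ | x ∈ A} := by
  have h1 : Continuous fun A : Set ℕ => chi A x := (continuous_apply x).comp continuous_chi
  have h2 : {A : Set ℕ | x ∈ A} = (fun A : Set ℕ => chi A x) ⁻¹' {true} := by
    ext A
    simp [chi]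
  rw [h2]
  exact (isClopen_discrete _).preimage h1

lemma isClopen_mem_sub (x : ℕ) : IsClopen {A : {A : Set ℕ // A.Infinite} | x ∈ A.val} :=
  (isClopen_mem x).preimage continuous_subtype_val

lemma count_congr {p q : ℕ → Prop} {n : ℕ} (h : ∀ x < n, (p x ↔ q x)) :
    Nat.count p n = Nat.count q n := by
  classical
  induction n with
  | zero => simp
  | succ n ih =>
    rw [Nat.count_succ, Nat.count_succ, ih fun x hx => h x (hx.trans (Nat.lt_succ_self n))]
    by_cases hp : p n
    · rw [if_pos hp, if_pos ((h n (Nat.lt_succ_self n)).1 hp)]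
    · rw [if_neg hp, if_neg fun hq => hp ((h n (Nat.lt_succ_self n)).2 hq)]

lemma nth_congr {A B : Set ℕ} (hA : A.Infinite) (hB : B.Infinite) {N k : ℕ}
    (hag : ∀ x ≤ N, (x ∈ A ↔ x ∈ B)) (hk : Nat.nth (· ∈ A) k ≤ N) :
    Nat.nth (· ∈ B) k = Nat.nth (· ∈ A) k := by
  set m := Nat.nth (· ∈ A) k with hm
  have hmA : m ∈ A := Nat.nth_mem_of_infinite hA k
  have hmB : m ∈ B := (hag m hk).1 hmA
  have hc : Nat.count (· ∈ B) m = Nat.count (· ∈ A) m :=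
    count_congr fun x hx => (hag x (le_of_lt (hx.trans_le hk))).symm
  have h1 : Nat.count (· ∈ A) m = k := Nat.count_nth_of_infinite (p := (· ∈ A)) hA k
  have := Nat.nth_count (p := (· ∈ B)) hmB
  rw [hc, h1] at this
  exact this

/-- On `Lfam`, `Del` agrees with this "finitary" set function. -/
def Fd (A : Set ℕ) : Set ℕ := {d | ∃ b, b < d ∧ b ∈ A ∧ b + d ∈ A}

lemma Del_eq_Fd {A : Set ℕ} (hA : A.Infinite)
    (hL : ∀ n : ℕ, Nat.nth (· ∈ A) n < Nat.nth (· ∈ A) (n + 1) - Nat.nth (· ∈ A) n) :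
    Del A = Fd A := by
  ext d
  constructor
  · rintro ⟨a, haA, b, hbA, hba, rfl⟩
    set k := Nat.count (· ∈ A) b with hk
    have hbk : Nat.nth (· ∈ A) k = b := Nat.nth_count hbA
    have hca : k + 1 ≤ Nat.count (· ∈ A) a := by
      have h1 : Nat.count (· ∈ A) (b + 1) = k + 1 := by
        rw [Nat.count_succ, if_pos hbA]
      have h2 : Nat.count (· ∈ A) (b + 1) ≤ Nat.count (· ∈ A) a :=
        Nat.count_monotone _ hba
      omega
    have hna : Nat.nth (· ∈ A) (k + 1) ≤ a := by
      have := (Nat.nth_monotone (p := (· ∈ A)) hA) hca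
      rwa [Nat.nth_count (p := (· ∈ A)) haA] at this
    have hgap := hL k
    refine ⟨b, ?_, hbA, ?_⟩
    · rw [hbk] at hgap; omega
    · have : b + (a - b) = a := by omega
      rw [this]; exact haA
  · rintro ⟨b, hbd, hbA, hbdA⟩
    exact ⟨b + d, hbdA, b, hbA, by omega, by omega⟩

lemma isClopen_Fd_mem (d : ℕ) :
    IsClopen {A : {A : Set ℕ // A.Infinite} | d ∈ Fd A.val} := by
  have : {A : {A : Set ℕ // A.Infinite} | d ∈ Fd A.val} =
      ⋃ b ∈ Finset.range d,
        ({A : {A : Set ℕ // A.Infinite} | b ∈ A.val} ∩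
         {A : {A : Set ℕ // A.Infinite} | b + d ∈ A.val}) := by
    ext A
    simp only [Set.mem_setOf_eq, Fd, Set.mem_iUnion, Set.mem_inter_iff, Finset.mem_range]
    tauto
  rw [this]
  exact isClopen_biUnion_finset fun b _ =>
    (isClopen_mem_sub b).inter (isClopen_mem_sub (b + d))

lemma continuous_Fd : Continuous fun A : {A : Set ℕ // A.Infinite} => Fd A.val := by
  rw [continuous_induced_rng]
  refine continuous_pi fun d => ?_
  have heq : (fun A : {A : Set ℕ // A.Infinite} => chi (Fd A.val) d) =
      Set.boolIndicator {A : {A : Set ℕ // A.Infinite} | d ∈ Fd A.val} := by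
    funext A
    rw [chi_eq_boolIndicator]
    unfold Set.boolIndicator
    by_cases h : d ∈ Fd A.val <;> simp [h]
  exact heq ▸ (continuous_boolIndicator_iff_isClopen _).2 (isClopen_Fd_mem d)

/-- `L` is closed in `[ℕ]^ω` and the restriction `Δ↾L` is continuous. -/
theorem Lfam_closed_and_Del_continuousOn :
    IsClosed Lfam ∧
      ContinuousOn (fun A : {A : Set ℕ // A.Infinite} => Del A.val) Lfam := by
  constructor
  · -- closedness
    have : Lfam = ⋂ n : ℕ, {A : {A : Set ℕ // A.Infinite} |
        Nat.nth (· ∈ A.val) n < Nat.nth (· ∈ A.val) (n + 1) - Nat.nth (· ∈ A.val) n} := by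
      ext A; simp [Lfam, Set.mem_iInter]
    rw [this]
    refine isClosed_iInter fun n => ?_
    rw [← isOpen_compl_iff, isOpen_iff_mem_nhds]
    intro A hA
    rw [Set.mem_compl_iff, Set.mem_setOf_eq, not_lt] at hA
    set N := Nat.nth (· ∈ A.val) (n + 1) with hN
    set U := ⋂ x ∈ Finset.range (N + 1),
      (if x ∈ A.val then {B : {A : Set ℕ // A.Infinite} | x ∈ B.val}
        else {B : {A : Set ℕ // A.Infinite} | x ∈ B.val}ᶜ) with hU
    have hUopen : IsOpen U := by
      refine Set.Finite.isOpen_biInter (Finset.range (N + 1)).finite_toSet fun x _ => ?_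
      by_cases hx : x ∈ A.val
      · rw [if_pos hx]; exact (isClopen_mem_sub x).2
      · rw [if_neg hx]; exact (isClopen_mem_sub x).1.isOpen_compl
    have hAU : A ∈ U := by
      simp only [hU, Set.mem_iInter]
      intro x _
      by_cases hx : x ∈ A.val
      · rw [if_pos hx]; exact hx
      · rw [if_neg hx]; exact hx
    refine mem_nhds_iff.2 ⟨U, ?_, hUopen, hAU⟩
    intro B hB
    have hag : ∀ x ≤ N, (x ∈ A.val ↔ x ∈ B.val) := by
      intro x hx
      have := Set.mem_iInter.1 (Set.mem_iInter.1 hB x)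
        (Finset.mem_coe.2 (Finset.mem_range.2 (by omega)))
      by_cases hxA : x ∈ A.val
      · rw [if_pos hxA] at this; exact ⟨fun _ => this, fun _ => hxA⟩
      · rw [if_neg hxA] at this; exact ⟨fun h => absurd h hxA, fun h => absurd h this⟩
    have hn1 : Nat.nth (· ∈ B.val) (n + 1) = Nat.nth (· ∈ A.val) (n + 1) :=
      nth_congr A.prop B.prop hag (by omega)
    have hn0 : Nat.nth (· ∈ B.val) n = Nat.nth (· ∈ A.val) n := by
      refine nth_congr A.prop B.prop hag ?_
      have := Nat.nth_strictMono (p := (· ∈ A.val)) A.prop (lt_add_one n)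
      omega
    rw [Set.mem_compl_iff, Set.mem_setOf_eq, not_lt, hn0, hn1]
    exact hA
  · -- continuity
    refine ContinuousOn.congr (continuous_Fd.continuousOn) ?_
    intro A hA
    exact Del_eq_Fd A.prop hA
end

section
/- Every F_σ ideal on a countably infinite set Λ is P⁺: for every ⊆-decreasing sequence (A_n) of I-positive sets there exists an I-positive set B with B ⊆* A_n for every n. -/
open Set

lemma chi_eq_true_iff {X : Type*} {A : Set X} {x : X} : chi A x = true ↔ x ∈ A := by
  simp [chi]

lemma chi_injective {X : Type*} : Function.Injective (chi (X := X)) := by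
  intro A B h
  ext x
  rw [← chi_eq_true_iff, ← chi_eq_true_iff, h]

lemma chi_surjective {X : Type*} : Function.Surjective (chi (X := X)) := by
  intro f
  refine ⟨{x | f x = true}, ?_⟩
  funext x
  rcases h : f x with _ | _ <;> simp [chi, h]

/-- `chi` as a homeomorphism between `Set X` and `X → Bool`. -/
noncomputable def chiHomeo (X : Type*) : Set X ≃ₜ (X → Bool) :=
  { Equiv.ofBijective chi ⟨chi_injective, chi_surjective⟩ with
    continuous_toFun := continuous_induced_dom
    continuous_invFun := by
      apply continuous_induced_rng.mpr
      convert continuous_id using 1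
      funext f
      exact (Equiv.ofBijective chi ⟨chi_injective, chi_surjective⟩).apply_symm_apply f }

noncomputable instance (X : Type*) : T2Space (Set X) :=
  (chiHomeo X).symm.t2Space

noncomputable instance (X : Type*) : CompactSpace (Set X) :=
  (chiHomeo X).symm.compactSpace

lemma continuous_inter {X : Type*} :
    Continuous (fun p : Set X × Set X => p.1 ∩ p.2) := by
  apply continuous_induced_rng.mpr
  have heq : (chi ∘ fun p : Set X × Set X => p.1 ∩ p.2) =
      fun p : Set X × Set X => fun x => chi p.1 x && chi p.2 x := by
    funext p x
    by_cases h1 : x ∈ p.1 <;> by_cases h2 : x ∈ p.2 <;> simp [chi, h1, h2]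
  rw [heq]
  apply continuous_pi
  intro x
  have hAnd : Continuous (fun q : Bool × Bool => q.1 && q.2) :=
    continuous_of_discreteTopology
  exact hAnd.comp (((continuous_apply x).comp
      ((continuous_induced_dom (f := chi (X := X))).comp continuous_fst)).prodMk
    ((continuous_apply x).comp
      ((continuous_induced_dom (f := chi (X := X))).comp continuous_snd)))

/-- The downward closure of a closed family of sets is closed. -/
lemma isClosed_downclosure {X : Type*} {K : Set (Set X)} (hK : IsClosed K) :
    IsClosed {Y : Set X | ∃ Z ∈ K, Y ⊆ Z} := by
  have himg : {Y : Set X | ∃ Z ∈ K, Y ⊆ Z} =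
      (fun p : Set X × Set X => p.1 ∩ p.2) '' (K ×ˢ univ) := by
    ext Y
    constructor
    · rintro ⟨Z, hZ, hYZ⟩
      exact ⟨(Z, Y), ⟨hZ, mem_univ _⟩, by
        ext x; simp only [mem_inter_iff]; exact ⟨fun h => h.2, fun h => ⟨hYZ h, h⟩⟩⟩
    · rintro ⟨⟨Z, W⟩, ⟨hZ, -⟩, rfl⟩
      exact ⟨Z, hZ, inter_subset_left⟩
  rw [himg]
  exact ((hK.isCompact.prod isCompact_univ).image continuous_inter).isClosed

/-- A set all of whose finite subsets lie in a closed family lies in that family. -/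
lemma mem_of_forall_finite_subset {X : Type*} {K : Set (Set X)} (hK : IsClosed K)
    {A : Set X} (h : ∀ F : Set X, F ⊆ A → F.Finite → F ∈ K) : A ∈ K := by
  by_contra hA
  have hclosed : IsClosed (chi '' K : Set (X → Bool)) := by
    have := (chiHomeo X).isClosedMap K hK
    exact this
  have hopen : IsOpen ((chi '' K)ᶜ : Set (X → Bool)) := hclosed.isOpen_compl
  have hmem : chi A ∈ ((chi '' K)ᶜ : Set (X → Bool)) := by
    rintro ⟨B, hB, hBA⟩
    exact hA (chi_injective hBA ▸ hB)
  obtain ⟨s, u, hu, hsub⟩ := (isOpen_pi_iff.mp hopen) (chi A) hmem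
  have hF : (A ∩ ↑s) ∈ K :=
    h (A ∩ ↑s) inter_subset_left (s.finite_toSet.inter_of_right A)
  have hmemF : chi (A ∩ ↑s) ∈ (↑s : Set X).pi u := by
    intro x hx
    have hxs : x ∈ (s : Set X) := hx
    have heq : chi (A ∩ ↑s) x = chi A x := by
      by_cases hxA : x ∈ A <;> simp [chi, hxA, hxs]
    rw [heq]
    exact (hu x hx).2
  exact hsub hmemF ⟨A ∩ ↑s, hF, rfl⟩

/-- Every `F_σ` ideal on a countably infinite set `Λ` is `P⁺`: for every `⊆`-decreasing
sequence `(A_n)` of `I`-positive sets there is an `I`-positive `B` with `B ⊆* A_n`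
for every `n`. -/
theorem Fsigma_ideal_Pplus {Λ : Type*} [Countable Λ] [Infinite Λ]
    (I : Set (Set Λ)) (hI : IsIdealOn Λ I)
    (hFσ : ∃ C : ℕ → Set (Set Λ), (∀ n, IsClosed (C n)) ∧ I = ⋃ n, C n) :
    ∀ A : ℕ → Set Λ, (∀ n, A n ∉ I) → (∀ n, A (n + 1) ⊆ A n) →
      ∃ B : Set Λ, B ∉ I ∧ ∀ n, (B \ A n).Finite := by
  intro A hA hmono
  obtain ⟨C, hCcl, hCI⟩ := hFσ
  obtain ⟨-, hdown, -, -, -⟩ := hI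
  set D : ℕ → Set (Set Λ) := fun n => {Y | ∃ Z ∈ C n, Y ⊆ Z} with hD
  have hDcl : ∀ n, IsClosed (D n) := fun n => isClosed_downclosure (hCcl n)
  have hDI : ∀ n, D n ⊆ I := by
    rintro n Y ⟨Z, hZ, hYZ⟩
    exact hdown Y Z hYZ (hCI ▸ mem_iUnion.mpr ⟨n, hZ⟩)
  have hAnti : Antitone A := antitone_nat_of_succ_le hmono
  have hex : ∀ n, ∃ F : Set Λ, F ⊆ A n ∧ F.Finite ∧ F ∉ D n := by
    intro n
    by_contra h
    push_neg at h
    have : A n ∈ D n :=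
      mem_of_forall_finite_subset (hDcl n) (fun F hFA hFfin => h F hFA hFfin)
    exact hA n (hDI n this)
  choose F hFsub hFfin hFD using hex
  refine ⟨⋃ n, F n, ?_, ?_⟩
  · intro hB
    rw [hCI] at hB
    obtain ⟨n, hn⟩ := mem_iUnion.mp hB
    exact hFD n ⟨⋃ m, F m, hn, subset_iUnion F n⟩
  · intro n
    have hsub : (⋃ m, F m) \ A n ⊆ ⋃ m ∈ Finset.range n, F m := by
      rintro x ⟨hx, hxA⟩
      obtain ⟨m, hm⟩ := mem_iUnion.mp hx
      rcases lt_or_ge m n with h | h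
      · exact mem_iUnion₂.mpr ⟨m, Finset.mem_range.mpr h, hm⟩
      · exact absurd (hAnti h (hFsub m hm)) hxA
    exact (Set.Finite.biUnion (Finset.range n).finite_toSet
      (fun m _ => hFfin m)).subset hsub
end

section
/- The density-zero ideal I_d = {A ⊆ ℕ : limsup_{n→∞} |A ∩ n|/n = 0} is not P⁺: there exists a ⊆-decreasing sequence (B_n) of sets of positive upper density such that every set C with C ⊆* B_n for all n has upper density zero. -/
open Classical in
/-- The upper asymptotic density `d̄(A) = limsup_{n→∞} |A ∩ {0,…,n−1}|/n`. -/
noncomputable def upperDensity (A : Set ℕ) : ℝ :=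
  Filter.limsup (fun n : ℕ => (((Finset.range n).filter (· ∈ A)).card : ℝ) / n)
    Filter.atTop

open Classical Filter Finset

private lemma term_nonneg (A : Set ℕ) (N : ℕ) :
    0 ≤ (((Finset.range N).filter (· ∈ A)).card : ℝ) / N := by positivity

private lemma term_le_one (A : Set ℕ) (N : ℕ) :
    (((Finset.range N).filter (· ∈ A)).card : ℝ) / N ≤ 1 := by
  rcases Nat.eq_zero_or_pos N with h | h
  · simp [h]
  · rw [div_le_one (by exact_mod_cast h)]
    exact_mod_cast le_trans (Finset.card_filter_le _ _) (Finset.card_range N).le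

private lemma bddU (A : Set ℕ) :
    IsBoundedUnder (· ≤ ·) atTop
      (fun N : ℕ => (((Finset.range N).filter (· ∈ A)).card : ℝ) / N) :=
  isBoundedUnder_of ⟨1, fun N => term_le_one A N⟩

private lemma cobddU (A : Set ℕ) :
    IsCoboundedUnder (· ≤ ·) atTop
      (fun N : ℕ => (((Finset.range N).filter (· ∈ A)).card : ℝ) / N) :=
  isCoboundedUnder_le_of_eventually_le atTop (x := 0) (Eventually.of_forall (term_nonneg A))

private lemma upperDensity_nonneg (A : Set ℕ) : 0 ≤ upperDensity A :=
  le_limsup_of_frequently_le ((Eventually.of_forall (term_nonneg A)).frequently) (bddU A)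

private lemma count_dvd_lower {d : ℕ} (hd : 0 < d) (N : ℕ) :
    N / d ≤ ((Finset.range N).filter (fun m => d ∣ m)).card := by
  have hsub : (Finset.range (N / d)).image (· * d) ⊆
      (Finset.range N).filter (fun m => d ∣ m) := by
    intro m hm
    simp only [Finset.mem_image, Finset.mem_range] at hm
    obtain ⟨k, hk, rfl⟩ := hm
    simp only [Finset.mem_filter, Finset.mem_range]
    refine ⟨?_, dvd_mul_left d k⟩
    calc k * d < (k + 1) * d := by nlinarith
    _ ≤ (N / d) * d := Nat.mul_le_mul_right d hk
    _ ≤ N := Nat.div_mul_le_self N d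
  calc N / d = ((Finset.range (N / d)).image (· * d)).card := by
        rw [Finset.card_image_of_injective _ fun a b h => Nat.eq_of_mul_eq_mul_right hd h,
          Finset.card_range]
  _ ≤ _ := Finset.card_le_card hsub

private lemma count_dvd_upper {d : ℕ} (hd : 0 < d) (N : ℕ) :
    ((Finset.range N).filter (fun m => d ∣ m)).card ≤ N / d + 1 := by
  have hsub : (Finset.range N).filter (fun m => d ∣ m) ⊆
      (Finset.range (N / d + 1)).image (· * d) := by
    intro m hm
    simp only [Finset.mem_filter, Finset.mem_range] at hm
    obtain ⟨hmN, k, rfl⟩ := hm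
    simp only [Finset.mem_image, Finset.mem_range]
    refine ⟨k, ?_, (mul_comm k d)⟩
    have : k ≤ N / d := by
      have h := Nat.div_le_div_right (c := d) hmN.le
      rwa [Nat.mul_div_cancel_left k hd] at h
    omega
  calc _ ≤ ((Finset.range (N / d + 1)).image (· * d)).card := Finset.card_le_card hsub
  _ ≤ N / d + 1 := (Finset.card_image_le).trans_eq (Finset.card_range _)

/-- The density-zero ideal is not `P⁺`: there is a `⊆`-decreasing sequence `(B_n)` of
sets of positive upper density such that every `C` with `C ⊆* B_n` for all `n` has
upper density zero. -/
theorem densityZero_not_Pplus :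
    ∃ B : ℕ → Set ℕ,
      (∀ n, B (n + 1) ⊆ B n) ∧
      (∀ n, 0 < upperDensity (B n)) ∧
      ∀ C : Set ℕ, (∀ n, (C \ B n).Finite) → upperDensity C = 0 := by
  refine ⟨fun n => {m | 2 ^ n ∣ m}, ?_, ?_, ?_⟩
  · intro n m hm
    exact dvd_trans (pow_dvd_pow 2 (Nat.le_succ n)) hm
  · intro n
    set d : ℕ := 2 ^ n with hd
    have hdpos : 0 < d := Nat.pow_pos (by norm_num)
    have hdR : (0:ℝ) < d := by exact_mod_cast hdpos
    have hfe : ∀ N : ℕ, (Finset.range N).filter (· ∈ ({m | d ∣ m} : Set ℕ)) =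
        (Finset.range N).filter (fun m => d ∣ m) := fun N =>
      Finset.filter_congr (fun x _ => Iff.rfl)
    refine lt_of_lt_of_le (b := 1 / (2 * (d:ℝ))) (one_div_pos.mpr (by linarith)) ?_
    refine le_limsup_of_frequently_le ?_ (bddU _)
    refine ((eventually_ge_atTop (2 * d)).mono ?_).frequently
    intro N hN
    have hN0 : (0:ℝ) < N := by
      have : 0 < N := lt_of_lt_of_le hdpos (le_trans (by omega) hN)
      exact_mod_cast this
    have hcount : (N / d : ℕ) ≤ ((Finset.range N).filter (· ∈ {m | d ∣ m})).card := by
      rw [hfe]; exact count_dvd_lower hdpos N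
    have hfloor : (N : ℝ) / d - 1 < ((N / d : ℕ) : ℝ) := by
      have h1 : N < (N / d + 1) * d := (Nat.div_lt_iff_lt_mul hdpos).mp (Nat.lt_succ_self _)
      have h2 : (N : ℝ) < ((N / d : ℕ) + 1) * d := by exact_mod_cast h1
      rw [div_sub_one (ne_of_gt hdR), div_lt_iff₀ hdR]
      nlinarith
    have hNd : (N : ℝ) ≥ 2 * d := by exact_mod_cast hN
    have key : 1 / (2 * d) * N ≤ ((((Finset.range N).filter (· ∈ {m | d ∣ m})).card : ℝ)) := by
      have h2 : ((N / d : ℕ) : ℝ) ≤ (((Finset.range N).filter (· ∈ {m | d ∣ m})).card : ℝ) := by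
        exact_mod_cast hcount
      have h3 : (1 : ℝ) / (2 * d) * N ≤ (N : ℝ) / d - 1 := by
        have e1 : (1:ℝ)/(2*(d:ℝ))*(N:ℝ) = (N:ℝ)/(2*(d:ℝ)) := by ring
        have e2 : ((N:ℝ)/(d:ℝ))*(d:ℝ) = (N:ℝ) := div_mul_cancel₀ _ (ne_of_gt hdR)
        rw [e1, div_le_iff₀ (by positivity)]
        nlinarith [e2]
      linarith
    rw [le_div_iff₀ hN0]
    convert key using 3
    all_goals (ext m; simp [hd, Set.mem_setOf_eq])
  · intro C hC
    refine le_antisymm ?_ (upperDensity_nonneg C)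
    have main : ∀ n : ℕ, upperDensity C ≤ 1 / (2 ^ n : ℝ) := by
      intro n
      set d : ℕ := 2 ^ n with hd
      have hdpos : 0 < d := Nat.pow_pos (by norm_num)
      have hdR : (0:ℝ) < d := by exact_mod_cast hdpos
      set K : ℕ := (hC n).toFinset.card with hK
      have hbound : ∀ᶠ N : ℕ in atTop,
          (((Finset.range N).filter (· ∈ C)).card : ℝ) / N ≤ (K + 1 : ℝ) / N + 1 / d := by
        refine (eventually_ge_atTop 1).mono fun N hN => ?_
        have hN0 : (0:ℝ) < N := by exact_mod_cast hN
        have hsub : (Finset.range N).filter (· ∈ C) ⊆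
            (hC n).toFinset ∪ (Finset.range N).filter (fun m => d ∣ m) := by
          intro m hm
          simp only [Finset.mem_filter, Finset.mem_range] at hm
          by_cases hmem : d ∣ m
          · exact Finset.mem_union_right _ (by simp [Finset.mem_filter, Finset.mem_range, hm.1, hmem])
          · refine Finset.mem_union_left _ ?_
            simp only [Set.Finite.mem_toFinset, Set.mem_diff, Set.mem_setOf_eq]
            exact ⟨hm.2, hmem⟩
        have hcard : (((Finset.range N).filter (· ∈ C)).card : ℝ) ≤ K + (N / d + 1 : ℕ) := by
          have := (Finset.card_le_card hsub).trans
            ((Finset.card_union_le _ _).trans (Nat.add_le_add_left (count_dvd_upper hdpos N) K))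
          exact_mod_cast this
        have hdiv : ((N / d + 1 : ℕ) : ℝ) ≤ (N : ℝ) / d + 1 := by
          push_cast
          have := (Nat.cast_div_le (α := ℝ) (m := N) (n := d))
          linarith
        rw [div_le_iff₀ hN0]
        calc (((Finset.range N).filter (· ∈ C)).card : ℝ) ≤ K + ((N:ℝ)/d + 1) := by linarith
        _ = ((K + 1 : ℝ) / N + 1 / d) * N := by field_simp; ring
      have hg : Tendsto (fun N : ℕ => (K + 1 : ℝ) / N + 1 / d) atTop (nhds (1 / d)) := by
        have := (tendsto_const_div_atTop_nhds_zero_nat (K + 1 : ℝ)).add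
          (tendsto_const_nhds (x := (1 : ℝ) / d))
        simpa using this
      have hle := limsup_le_limsup hbound (cobddU C) hg.isBoundedUnder_le
      rw [hg.limsup_eq] at hle
      calc upperDensity C ≤ 1 / (d : ℝ) := hle
      _ = 1 / (2 ^ n : ℝ) := by rw [hd]; push_cast; ring
    have h2 : Tendsto (fun n : ℕ => ((1:ℝ)/2) ^ n) atTop (nhds 0) :=
      tendsto_pow_atTop_nhds_zero_of_lt_one (by norm_num) (by norm_num)
    have h2' : Tendsto (fun n : ℕ => 1 / (2 ^ n : ℝ)) atTop (nhds 0) := by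
      simpa [div_pow] using h2
    exact ge_of_tendsto h2' (Eventually.of_forall main)
end

section
/- The Hindman ideal H is not P⁻(ω): the sets A_k = {2^k(2n+1) : n ∈ ω} form a partition of positive integers such that each A_k ∈ H, but every IP-set B (i.e., B ∉ H) has infinite intersection with some A_k. -/
def FS (D : Set ℕ) : Set ℕ :=
  {m : ℕ | ∃ s : Finset ℕ, s.Nonempty ∧ ↑s ⊆ D ∧ m = ∑ i ∈ s, i}

def HindmanIdeal : Set (Set ℕ) :=
  {A : Set ℕ | ¬ ∃ D : Set ℕ, D.Infinite ∧ FS D ⊆ A}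

def Awit (k : ℕ) : Set ℕ :=
  {m : ℕ | ∃ n : ℕ, m = 2 ^ k * (2 * n + 1)}

lemma mem_Awit_factorization {m : ℕ} (hm : m ≠ 0) : m ∈ Awit (m.factorization 2) := by
  have key := Nat.ordProj_mul_ordCompl_eq_self m 2
  have ho : ¬ 2 ∣ m / 2 ^ m.factorization 2 := Nat.not_dvd_ordCompl Nat.prime_two hm
  set o := m / 2 ^ m.factorization 2 with hodef
  refine ⟨o / 2, ?_⟩
  have h2 : o = 2 * (o / 2) + 1 := by omega
  rw [← h2]
  exact key.symm

lemma factorization_of_mem_Awit {m k : ℕ} (h : m ∈ Awit k) : m.factorization 2 = k := by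
  obtain ⟨n, rfl⟩ := h
  rw [Nat.factorization_mul (pow_ne_zero _ two_ne_zero) (by omega : 2 * n + 1 ≠ 0)]
  simp [Nat.factorization_eq_zero_of_not_dvd (by omega : ¬ 2 ∣ 2 * n + 1),
    Nat.Prime.factorization_pow, Nat.prime_two]

lemma Awit_pos {m k : ℕ} (h : m ∈ Awit k) : 0 < m := by
  obtain ⟨n, rfl⟩ := h; positivity

lemma mem_FS_of_mem {D : Set ℕ} {d : ℕ} (hd : d ∈ D) : d ∈ FS D :=
  ⟨{d}, Finset.singleton_nonempty d, by simpa using hd, by simp⟩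

lemma add_mem_FS {D : Set ℕ} {d e : ℕ} (hd : d ∈ D) (he : e ∈ D) (hne : d ≠ e) :
    d + e ∈ FS D :=
  ⟨{d, e}, Finset.insert_nonempty _ _, by
    intro x hx; simp only [Finset.coe_insert, Finset.coe_singleton, Set.mem_insert_iff,
      Set.mem_singleton_iff] at hx
    rcases hx with rfl | rfl <;> assumption,
    by rw [Finset.sum_pair hne]⟩

/-- The Hindman ideal is not `P⁻(ω)`: the sets `A_k = {2^k(2n+1) : n ∈ ω}` form a
partition of the positive integers, each `A_k ∈ H`, but every IP-set `B` has infinite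
intersection with some `A_k`. -/
theorem hindman_not_Pminus :
    (⋃ k, Awit k) = {m : ℕ | 0 < m} ∧
    (∀ k l, k ≠ l → Disjoint (Awit k) (Awit l)) ∧
    (∀ k, Awit k ∈ HindmanIdeal) ∧
    (∀ B : Set ℕ, B ∉ HindmanIdeal → ∃ k, (B ∩ Awit k).Infinite) := by
  refine ⟨?_, ?_, ?_, ?_⟩
  · ext m
    simp only [Set.mem_iUnion, Set.mem_setOf_eq]
    constructor
    · rintro ⟨k, hk⟩; exact Awit_pos hk
    · intro hm; exact ⟨_, mem_Awit_factorization hm.ne'⟩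
  · intro k l hne
    rw [Set.disjoint_left]
    intro m hk hl
    exact hne ((factorization_of_mem_Awit hk).symm.trans (factorization_of_mem_Awit hl))
  · intro k
    rintro ⟨D, hDinf, hFS⟩
    obtain ⟨d₁, hd₁, d₂, hd₂, hne⟩ := hDinf.nontrivial
    obtain ⟨a, ha⟩ := hFS (mem_FS_of_mem hd₁)
    obtain ⟨b, hb⟩ := hFS (mem_FS_of_mem hd₂)
    obtain ⟨c, hc⟩ := hFS (add_mem_FS hd₁ hd₂ hne)
    rw [ha, hb] at hc
    have hp : (0:ℕ) < 2 ^ k := pow_pos (by norm_num) k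
    have : (2 * a + 1) + (2 * b + 1) = 2 * c + 1 := by
      apply Nat.eq_of_mul_eq_mul_left hp
      rw [Nat.mul_add]; exact hc
    omega
  · intro B hB
    simp only [HindmanIdeal, Set.mem_setOf_eq, not_not] at hB
    obtain ⟨D, hDinf, hFS⟩ := hB
    set D' : Set ℕ := D \ {0} with hD'def
    have hD' : D'.Infinite := hDinf.diff (Set.finite_singleton 0)
    have hFS' : FS D' ⊆ B := by
      rintro m ⟨s, hs, hsub, rfl⟩
      exact hFS ⟨s, hs, hsub.trans Set.diff_subset, rfl⟩
    have hpos : ∀ d ∈ D', d ≠ 0 := fun d hd => by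
      simp only [hD'def, Set.mem_diff, Set.mem_singleton_iff] at hd; exact hd.2
    by_cases hcase : ∃ k, {d ∈ D' | d.factorization 2 = k}.Infinite
    · obtain ⟨k, hk⟩ := hcase
      refine ⟨k, hk.mono fun d hd => ⟨hFS' (mem_FS_of_mem hd.1), ?_⟩⟩
      exact hd.2 ▸ mem_Awit_factorization (hpos d hd.1)
    · push_neg at hcase
      obtain ⟨d₀, hd₀⟩ := hD'.nonempty
      set k := d₀.factorization 2 with hkdef
      have hT : {d ∈ D' | d.factorization 2 ≤ k}.Finite := by
        have hsub : {d ∈ D' | d.factorization 2 ≤ k} ⊆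
            ⋃ j ∈ Finset.range (k + 1), {d ∈ D' | d.factorization 2 = j} := by
          intro d hd
          exact Set.mem_iUnion₂.mpr ⟨d.factorization 2, Finset.mem_range.mpr (Nat.lt_succ_of_le hd.2), hd.1, rfl⟩
        exact (Set.Finite.biUnion (Finset.finite_toSet _)
          (fun j _ => hcase j)).subset hsub
      have hS : (D' \ {d ∈ D' | d.factorization 2 ≤ k}).Infinite := hD'.diff hT
      refine ⟨k, ?_⟩
      have hinj : Set.InjOn (fun d => d₀ + d) (D' \ {d ∈ D' | d.factorization 2 ≤ k}) :=
        fun a _ b _ h => by simpa using h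
      have himg := hS.image hinj
      refine himg.mono ?_
      rintro _ ⟨d, hd, rfl⟩
      obtain ⟨hdD', hdk⟩ := hd
      have hj : k < d.factorization 2 := by
        by_contra h
        exact hdk ⟨hdD', by omega⟩
      have hne : d₀ ≠ d := by rintro rfl; omega
      refine ⟨hFS' (add_mem_FS hd₀ hdD' hne), ?_⟩
      obtain ⟨a, ha⟩ := mem_Awit_factorization (hpos d₀ hd₀)
      obtain ⟨b, hb⟩ := mem_Awit_factorization (hpos d hdD')
      set j := d.factorization 2 with hjdef
      have hd2 : d = 2 ^ k * (2 * (2 ^ (j - k - 1) * (2 * b + 1))) := by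
        rw [hb, show (2:ℕ) ^ j = 2 ^ k * 2 ^ (j - k - 1) * 2 from by
          rw [← pow_add, ← pow_succ]; congr 1; omega]
        ring
      refine ⟨a + 2 ^ (j - k - 1) * (2 * b + 1), ?_⟩
      rw [← hkdef] at ha
      rw [ha, hd2]
      ring
end
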